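/- Let G be a finite abelian group of order v. Suppose {D_0,D_1,D_2,D_3} is a difference family of type H in G satisfying (d3), and {S_0,S_1,S_2,S_3} is a difference family of type H_4* in G satisfying (c1). Define, in G × ℤ/2ℤ: B_0 = D_0×{0} ∪ (G∖D_2)×{1}, B_1 = D_1×{0} ∪ (G∖D_3)×{1}, B_2 = S_0×{0} ∪ S_2×{1}, B_3 = S_1×{0} ∪ S_3×{1}. Then {B_0,B_1,B_2,B_3} is a difference family of type H_4* in G × ℤ/2ℤ. -/

import Mathlib

open Finset

noncomputable section

variable {G : Type*}

/-- The element of the group ring `ℤ[G]` associated to a finite subset `D ⊆ G`. -/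
def grp [AddCommGroup G] [DecidableEq G] (D : Finset G) : AddMonoidAlgebra ℤ G :=
  ∑ x ∈ D, AddMonoidAlgebra.single x 1

/-- `D^{(-1)} = {-x : x ∈ D}`. -/
def negSet [AddCommGroup G] [DecidableEq G] (D : Finset G) : Finset G :=
  D.image (fun x => -x)

/-- A subset is symmetric if `D = -D`. -/
def IsSymmetric [AddCommGroup G] [DecidableEq G] (D : Finset G) : Prop :=
  negSet D = D

/-- `G* = G \ {0}` as a finset. -/
def Gstar (G : Type*) [AddCommGroup G] [Fintype G] [DecidableEq G] : Finset G :=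
  Finset.univ \ {0}

/-- A difference family of type `H`: four blocks with `λ = Σ|D_i| - |G|`. -/
def IsTypeH [AddCommGroup G] [Fintype G] [DecidableEq G] (D : Fin 4 → Finset G) : Prop :=
  ∑ i, grp (D i) * grp (negSet (D i)) =
    ((∑ i, ((D i).card : ℤ)) - (Fintype.card G : ℤ)) • grp (Finset.univ : Finset G)
      + (Fintype.card G : ℤ) • AddMonoidAlgebra.single (0 : G) (1 : ℤ)

/-- A difference family of type `H_4^*`: four blocks with `λ = Σ|B_i| - (|G|+1)`. -/
def IsTypeH4star [AddCommGroup G] [Fintype G] [DecidableEq G] (B : Fin 4 → Finset G) : Prop :=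
  ∑ i, grp (B i) * grp (negSet (B i)) =
    ((∑ i, ((B i).card : ℤ)) - ((Fintype.card G : ℤ) + 1)) • grp (Finset.univ : Finset G)
      + ((Fintype.card G : ℤ) + 1) • AddMonoidAlgebra.single (0 : G) (1 : ℤ)

/-- A difference family of type `H_2^*`: two blocks with `λ = Σ|S_i| - (|G|+1)/2`. -/
def IsTypeH2star [AddCommGroup G] [Fintype G] [DecidableEq G] (S : Fin 2 → Finset G) : Prop :=
  ∑ i, grp (S i) * grp (negSet (S i)) =
    ((∑ i, ((S i).card : ℤ)) - ((Fintype.card G : ℤ) + 1) / 2) • grp (Finset.univ : Finset G)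
      + (((Fintype.card G : ℤ) + 1) / 2) • AddMonoidAlgebra.single (0 : G) (1 : ℤ)

/-- Condition (d3). -/
def CondD3 [AddCommGroup G] [Fintype G] [DecidableEq G] (D : Fin 4 → Finset G) : Prop :=
  grp (D 0) * grp (negSet (D 2)) + grp (D 2) * grp (negSet (D 0))
    + grp (D 1) * grp (negSet (D 3)) + grp (D 3) * grp (negSet (D 1)) =
    ((∑ i, ((D i).card : ℤ)) - (Fintype.card G : ℤ) + 1) • grp (Finset.univ : Finset G)

/-- Condition (c1). -/
def CondC1 [AddCommGroup G] [Fintype G] [DecidableEq G] (S : Fin 4 → Finset G) : Prop :=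
  grp (S 0) * grp (negSet (S 2)) + grp (S 2) * grp (negSet (S 0))
    + grp (S 1) * grp (negSet (S 3)) + grp (S 3) * grp (negSet (S 1)) =
    ((∑ i, ((S i).card : ℤ)) - (Fintype.card G : ℤ)) • grp (Finset.univ : Finset G)

/-- Condition (d2). -/
def CondD2 [AddCommGroup G] [Fintype G] [DecidableEq G] (D : Fin 4 → Finset G) : Prop :=
  ∃ E₀ E₁ : Finset G, E₀ ⊆ Gstar G ∧ E₁ ⊆ Gstar G ∧
    grp (D 0) + grp (D 1) - grp (D 2) - grp (D 3) = grp E₀ - grp (Gstar G \ E₀) ∧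
    grp (D 0) + grp (D 3) - grp (D 1) - grp (D 2) = grp E₁ - grp (Gstar G \ E₁) ∧
    IsTypeH4star ![E₀, E₁, Gstar G \ E₀, Gstar G \ E₁]

/-- A building family: eight symmetric, pairwise disjoint subsets partitioning `G*`,
satisfying (a3) and (a4). -/
def IsBuildingFamily [AddCommGroup G] [Fintype G] [DecidableEq G] (A : Fin 8 → Finset G) : Prop :=
  (∀ i, IsSymmetric (A i)) ∧
  (∀ i j, i ≠ j → Disjoint (A i) (A j)) ∧
  (Finset.univ.biUnion A = Gstar G) ∧
  IsTypeH4star ![A 0 ∪ A 1 ∪ A 6 ∪ A 7, A 2 ∪ A 3 ∪ A 4 ∪ A 5,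
    A 0 ∪ A 3 ∪ A 5 ∪ A 6, A 1 ∪ A 2 ∪ A 4 ∪ A 7] ∧
  (∑ i, grp (A i) * grp (A i)) - (∑ i, grp (A i) * grp (A (i + 4))) =
    ((Fintype.card G : ℤ) - 1) • AddMonoidAlgebra.single (0 : G) (1 : ℤ)
      + ((grp (A 0) + grp (A 1) + grp (A 2) + grp (A 3))
        - (grp (A 4) + grp (A 5) + grp (A 6) + grp (A 7)))

end

noncomputable section AuxProd
open AddMonoidAlgebra

variable {G : Type*} [AddCommGroup G] [DecidableEq G]

lemma mem_negSet {A : Finset G} {x : G} : x ∈ negSet A ↔ -x ∈ A := by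
  constructor
  · intro h
    rw [negSet, Finset.mem_image] at h
    obtain ⟨a, ha, rfl⟩ := h
    simpa
  · intro h
    rw [negSet, Finset.mem_image]
    exact ⟨-x, h, neg_neg x⟩

lemma negSet_union' (A B : Finset G) : negSet (A ∪ B) = negSet A ∪ negSet B :=
  Finset.image_union _ _

lemma negSet_card (A : Finset G) : (negSet A).card = A.card :=
  Finset.card_image_of_injective _ neg_injective

lemma negSet_sdiff [Fintype G] (A : Finset G) :
    negSet (Finset.univ \ A) = Finset.univ \ negSet A := by
  ext x
  simp [mem_negSet]

lemma grp_sdiff [Fintype G] (A : Finset G) :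
    grp (Finset.univ \ A) = grp Finset.univ - grp A :=
  Finset.sum_sdiff_eq_sub (Finset.subset_univ A)

lemma single_mul_grp_univ [Fintype G] (a : G) :
    AddMonoidAlgebra.single a (1:ℤ) * grp (Finset.univ : Finset G) = grp Finset.univ := by
  rw [grp, Finset.mul_sum]
  simp only [AddMonoidAlgebra.single_mul_single, one_mul]
  exact Fintype.sum_equiv (Equiv.addLeft a) _ _ (fun x => rfl)

lemma grp_mul_univ [Fintype G] (A : Finset G) :
    grp A * grp (Finset.univ : Finset G)
      = ((A.card : ℤ) : AddMonoidAlgebra ℤ G) * grp Finset.univ := by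
  rw [show grp A = ∑ x ∈ A, AddMonoidAlgebra.single x (1:ℤ) from rfl, Finset.sum_mul]
  rw [Finset.sum_congr rfl (fun a _ => single_mul_grp_univ a), Finset.sum_const]
  rw [nsmul_eq_mul]
  push_cast
  ring

def iotaZ2 (G : Type*) [AddCommGroup G] [DecidableEq G] :
    AddMonoidAlgebra ℤ G →+* AddMonoidAlgebra ℤ (G × ZMod 2) :=
  AddMonoidAlgebra.mapDomainRingHom ℤ (AddMonoidHom.inl G (ZMod 2))

def uZ2 (G : Type*) [AddCommGroup G] [DecidableEq G] : AddMonoidAlgebra ℤ (G × ZMod 2) :=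
  AddMonoidAlgebra.single ((0:G), (1:ZMod 2)) 1

lemma uZ2_sq : uZ2 G * uZ2 G = 1 := by
  have h : ((0:G),(1:ZMod 2)) + ((0:G),(1:ZMod 2)) = 0 := by
    rw [Prod.mk_add_mk, add_zero, show (1:ZMod 2) + 1 = 0 by decide]
    rfl
  rw [uZ2, AddMonoidAlgebra.single_mul_single, h, mul_one, AddMonoidAlgebra.one_def]

lemma grp_prodSingle (A : Finset G) (t : ZMod 2) :
    grp (A ×ˢ ({t} : Finset (ZMod 2))) =
      iotaZ2 G (grp A) * AddMonoidAlgebra.single ((0:G), t) (1:ℤ) := by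
  rw [grp, grp, map_sum, Finset.sum_mul, Finset.sum_product]
  refine Finset.sum_congr rfl fun a _ => ?_
  rw [Finset.sum_singleton]
  simp [iotaZ2, AddMonoidAlgebra.single_mul_single]

lemma grp_prod_zero (A : Finset G) :
    grp (A ×ˢ ({0} : Finset (ZMod 2))) = iotaZ2 G (grp A) := by
  rw [grp_prodSingle, show ((0:G),(0:ZMod 2)) = 0 from rfl, ← AddMonoidAlgebra.one_def,
    mul_one]

lemma grp_prod_one (A : Finset G) :
    grp (A ×ˢ ({1} : Finset (ZMod 2))) = iotaZ2 G (grp A) * uZ2 G :=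
  grp_prodSingle A 1

lemma disj01 (A B : Finset G) :
    Disjoint (A ×ˢ ({0} : Finset (ZMod 2))) (B ×ˢ ({1} : Finset (ZMod 2))) := by
  rw [Finset.disjoint_left]
  rintro ⟨x, t⟩ hx hy
  rw [Finset.mem_product] at hx hy
  rw [Finset.mem_singleton] at hx hy
  rw [hx.2] at hy
  exact absurd hy.2 (by decide)

lemma grp_union01 (A B : Finset G) :
    grp (A ×ˢ ({0} : Finset (ZMod 2)) ∪ B ×ˢ {1}) =
      iotaZ2 G (grp A) + iotaZ2 G (grp B) * uZ2 G := by
  rw [grp, Finset.sum_union (disj01 A B), ← grp, ← grp, grp_prod_zero, grp_prod_one]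

lemma negSet_prodSingle (A : Finset G) (t : ZMod 2) :
    negSet (A ×ˢ ({t} : Finset (ZMod 2))) = negSet A ×ˢ {t} := by
  have h2 : ∀ s : ZMod 2, -s = s := by decide
  ext ⟨x, s⟩
  rw [mem_negSet, show -(x,s) = (-x,-s) from rfl, Finset.mem_product, Finset.mem_product,
    Finset.mem_singleton, Finset.mem_singleton, ← mem_negSet, h2 s]

lemma univ_Z2_eq [Fintype G] :
    (Finset.univ : Finset (G × ZMod 2)) =
      (Finset.univ : Finset G) ×ˢ ({0} : Finset (ZMod 2)) ∪ Finset.univ ×ˢ {1} := by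
  have h2 : ∀ t : ZMod 2, t = 0 ∨ t = 1 := by decide
  ext ⟨x, t⟩
  simp [Finset.mem_product]
  rcases h2 t with h | h
  · exact Or.inl h.symm
  · exact Or.inr h.symm

omit [AddCommGroup G] [DecidableEq G] in
lemma card_prodSingle (A : Finset G) (t : ZMod 2) :
    (A ×ˢ ({t} : Finset (ZMod 2))).card = A.card := by
  rw [Finset.card_product, Finset.card_singleton, mul_one]

lemma card_union01 (A B : Finset G) :
    ((A ×ˢ ({0} : Finset (ZMod 2)) ∪ B ×ˢ {1}).card : ℤ) = (A.card : ℤ) + B.card := by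
  rw [Finset.card_union_of_disjoint (disj01 A B), card_prodSingle, card_prodSingle]
  push_cast
  ring

lemma card_sdiff_univ [Fintype G] (A : Finset G) :
    (((Finset.univ : Finset G) \ A).card : ℤ) = (Fintype.card G : ℤ) - A.card := by
  rw [Finset.card_sdiff_of_subset (Finset.subset_univ A), Finset.card_univ,
    Nat.cast_sub ((Finset.card_le_univ A).trans (le_of_eq Finset.card_univ))]

end AuxProd

/-- product construction with `ℤ/2ℤ` from a type-`H` family satisfying (d3)
and a type-`H_4^*` family satisfying (c1). -/
theorem product_construction_Z2 {G : Type*} [AddCommGroup G] [Fintype G] [DecidableEq G]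
    (D S : Fin 4 → Finset G) (hH : IsTypeH D) (hd3 : CondD3 D)
    (hS : IsTypeH4star S) (hc1 : CondC1 S) :
    IsTypeH4star (G := G × ZMod 2)
      ![(D 0) ×ˢ ({0} : Finset (ZMod 2)) ∪ ((Finset.univ : Finset G) \ D 2) ×ˢ {1},
        (D 1) ×ˢ ({0} : Finset (ZMod 2)) ∪ ((Finset.univ : Finset G) \ D 3) ×ˢ {1},
        (S 0) ×ˢ ({0} : Finset (ZMod 2)) ∪ (S 2) ×ˢ {1},
        (S 1) ×ˢ ({0} : Finset (ZMod 2)) ∪ (S 3) ×ˢ {1}] := by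
  classical
  have hH' := hH
  have hS' := hS
  have hd3' := hd3
  have hc1' := hc1
  unfold IsTypeH at hH'
  unfold IsTypeH4star at hS'
  unfold CondD3 at hd3'
  unfold CondC1 at hc1'
  simp only [Fin.sum_univ_four, zsmul_eq_mul, ← AddMonoidAlgebra.one_def] at hH' hS' hd3' hc1'
  have hJJ := grp_mul_univ (Finset.univ : Finset G)
  rw [Finset.card_univ] at hJJ
  have haJ : ∀ A : Finset G, grp A * grp (Finset.univ : Finset G)
      = ((A.card : ℤ) : AddMonoidAlgebra ℤ G) * grp Finset.univ := grp_mul_univ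
  have haJ' : ∀ A : Finset G, grp (negSet A) * grp (Finset.univ : Finset G)
      = ((A.card : ℤ) : AddMonoidAlgebra ℤ G) * grp Finset.univ := fun A => by
    rw [grp_mul_univ, negSet_card]
  have hE : grp (D 0) * grp (negSet (D 0)) + grp (D 1) * grp (negSet (D 1))
      + (grp (Finset.univ : Finset G) - grp (D 2)) * (grp Finset.univ - grp (negSet (D 2)))
      + (grp (Finset.univ : Finset G) - grp (D 3)) * (grp Finset.univ - grp (negSet (D 3)))
      + (grp (S 0) * grp (negSet (S 0)) + grp (S 1) * grp (negSet (S 1))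
        + grp (S 2) * grp (negSet (S 2)) + grp (S 3) * grp (negSet (S 3))) =
      ((((D 0).card : ℤ) + (D 1).card - (D 2).card - (D 3).card
        + (S 0).card + (S 1).card + (S 2).card + (S 3).card - 1 : ℤ) : AddMonoidAlgebra ℤ G)
        * grp Finset.univ
      + ((2 * (Fintype.card G : ℤ) + 1 : ℤ) : AddMonoidAlgebra ℤ G) := by
    push_cast at hH' hS' ⊢
    linear_combination hH' + hS' + 2 * hJJ - haJ (D 2) - haJ' (D 2) - haJ (D 3) - haJ' (D 3)
  have hC : grp (D 0) * (grp (Finset.univ : Finset G) - grp (negSet (D 2)))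
      + (grp (Finset.univ : Finset G) - grp (D 2)) * grp (negSet (D 0))
      + grp (D 1) * (grp (Finset.univ : Finset G) - grp (negSet (D 3)))
      + (grp (Finset.univ : Finset G) - grp (D 3)) * grp (negSet (D 1))
      + (grp (S 0) * grp (negSet (S 2)) + grp (S 2) * grp (negSet (S 0))
        + grp (S 1) * grp (negSet (S 3)) + grp (S 3) * grp (negSet (S 1))) =
      ((((D 0).card : ℤ) + (D 1).card - (D 2).card - (D 3).card
        + (S 0).card + (S 1).card + (S 2).card + (S 3).card - 1 : ℤ) : AddMonoidAlgebra ℤ G)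
        * grp Finset.univ := by
    push_cast at hd3' hc1' ⊢
    linear_combination haJ (D 0) + haJ' (D 0) + haJ (D 1) + haJ' (D 1) - hd3' + hc1'
  have hE2 := congrArg (iotaZ2 G) hE
  have hC2 := congrArg (iotaZ2 G) hC
  simp only [map_add, map_sub, map_mul, map_one, map_intCast] at hE2 hC2
  unfold IsTypeH4star
  simp only [Fin.sum_univ_four, Matrix.cons_val_zero, Matrix.cons_val_one, Matrix.head_cons,
    Matrix.cons_val_two, Matrix.tail_cons, Matrix.cons_val_three]
  rw [card_union01, card_union01, card_union01, card_union01, card_sdiff_univ, card_sdiff_univ]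
  simp only [negSet_union', negSet_prodSingle, negSet_sdiff]
  simp only [grp_union01, grp_sdiff, map_sub]
  rw [univ_Z2_eq, grp_union01, show (0 : G × ZMod 2) = ((0:G),(0:ZMod 2)) from rfl,
    show AddMonoidAlgebra.single ((0:G),(0:ZMod 2)) (1:ℤ) = 1 from AddMonoidAlgebra.one_def.symm]
  rw [Fintype.card_prod, ZMod.card 2]
  simp only [zsmul_eq_mul]
  push_cast at hE2 hC2 ⊢
  linear_combination hE2 + uZ2 G * hC2
    + ((iotaZ2 G (grp (Finset.univ : Finset G)) - iotaZ2 G (grp (D 2)))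
        * (iotaZ2 G (grp Finset.univ) - iotaZ2 G (grp (negSet (D 2))))
      + (iotaZ2 G (grp (Finset.univ : Finset G)) - iotaZ2 G (grp (D 3)))
        * (iotaZ2 G (grp Finset.univ) - iotaZ2 G (grp (negSet (D 3))))
      + iotaZ2 G (grp (S 2)) * iotaZ2 G (grp (negSet (S 2)))
      + iotaZ2 G (grp (S 3)) * iotaZ2 G (grp (negSet (S 3)))) * (uZ2_sq (G := G))
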